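/- arXiv:1910.04229 — 3 statements merged into one kernel-verified Lean document; each statement's English description precedes it below -/
import Mathlib

section
/- Sublinear convergence of three-operator splitting with one Lipschitz operator (Theorem 1): Let d ≥ 1, let f, g : ℝ^d → ℝ be convex, and let h : ℝ^d → ℝ be convex and differentiable with L_h-Lipschitz gradient, L_h > 0. Suppose α, λ, θ > 0 and σ₁, σ₂, σ₃ ≥ 0 are such that the 4×4 symmetric real matrix W₀ + σ₁Q₁ + σ₂Q₂ + σ₃Q₃ is negative semidefinite, where W₀ = [[λ²+θ/α², 0, −λ²−θ/α², −λ], [0,0,0,0], [−λ²−θ/α², 0, λ²+θ/α², λ], [−λ, 0, λ, 0]], Q₁ = B_gᵀ·[[0,1/2],[1/2,0]]·B_g with B_g = [[α,0,0,0],[−1,0,0,1]], Q₂ = B_hᵀ·[[0,1/2],[1/2,−1/L_h]]·B_h with B_h = [[α,0,0,0],[2,−1,0,−1]], and Q₃ = B_fᵀ·[[0,1/2],[1/2,0]]·B_f with B_f = [[0,0,α,0],[0,1,−1,0]]. Then along any TOS trajectory (z^k, x_B^k, y^k, x_A^k, p_g^k, p_f^k) with stepsize α and relaxation λ that admits a TOS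 fixed point (z*, x*, y*, p_g*, p_f*), one has for every k ≥ 1: min over 0 ≤ i < k of ‖p_f^i + p_g^i + ∇h(x_B^i)‖² ≤ ‖z⁰ − z*‖² / (θ k). -/
open scoped RealInnerProductSpace
open Matrix

/-- The matrix `W₀` appearing in the sublinear-rate certificate. -/
noncomputable def W0mat (α lam θ : ℝ) : Matrix (Fin 4) (Fin 4) ℝ :=
  !![lam ^ 2 + θ / α ^ 2, 0, -lam ^ 2 - θ / α ^ 2, -lam;
     0, 0, 0, 0;
     -lam ^ 2 - θ / α ^ 2, 0, lam ^ 2 + θ / α ^ 2, lam;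
     -lam, 0, lam, 0]

noncomputable def BgMat (α : ℝ) : Matrix (Fin 2) (Fin 4) ℝ := !![α, 0, 0, 0; -1, 0, 0, 1]

noncomputable def BhMat (α : ℝ) : Matrix (Fin 2) (Fin 4) ℝ := !![α, 0, 0, 0; 2, -1, 0, -1]

noncomputable def BfMat (α : ℝ) : Matrix (Fin 2) (Fin 4) ℝ := !![0, 0, α, 0; 0, 1, -1, 0]

/-- `Q₁ = B_gᵀ · [[0,1/2],[1/2,0]] · B_g`. -/
noncomputable def Q1mat (α : ℝ) : Matrix (Fin 4) (Fin 4) ℝ :=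
  (BgMat α)ᵀ * !![(0 : ℝ), 1 / 2; 1 / 2, 0] * BgMat α

/-- `Q₂ = B_hᵀ · [[0,1/2],[1/2,−1/L_h]] · B_h`. -/
noncomputable def Q2mat (α L_h : ℝ) : Matrix (Fin 4) (Fin 4) ℝ :=
  (BhMat α)ᵀ * !![(0 : ℝ), 1 / 2; 1 / 2, -1 / L_h] * BhMat α

/-- `Q₃ = B_fᵀ · [[0,1/2],[1/2,0]] · B_f`. -/
noncomputable def Q3mat (α : ℝ) : Matrix (Fin 4) (Fin 4) ℝ :=
  (BfMat α)ᵀ * !![(0 : ℝ), 1 / 2; 1 / 2, 0] * BfMat α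

section TosAux


variable {E : Type*} [NormedAddCommGroup E] [InnerProductSpace ℝ E] [CompleteSpace E]

lemma hasDerivAt_line (h : E → ℝ) (G : E → E) (hdiff : ∀ x, HasGradientAt h (G x) x)
    (a v : E) (t : ℝ) :
    HasDerivAt (fun s : ℝ => h (a + s • v)) ⟪G (a + t • v), v⟫ t := by
  have hc : HasDerivAt (fun s : ℝ => a + s • v) v t := by
    simpa using ((hasDerivAt_id t).smul_const v).const_add a
  have hF := (hasGradientAt_iff_hasFDerivAt.1 (hdiff (a + t • v)))
  have := hF.comp_hasDerivAt t hc
  simpa [InnerProductSpace.toDual_apply_apply, Function.comp_def] using this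

lemma grad_lower (h : E → ℝ) (G : E → E) (hh : ConvexOn ℝ Set.univ h)
    (hdiff : ∀ x, HasGradientAt h (G x) x) (x w : E) :
    h x + ⟪G x, w - x⟫ ≤ h w := by
  have hψ : ConvexOn ℝ Set.univ (fun t : ℝ => h (x + t • (w - x))) := by
    have h2 := hh.comp_affineMap (AffineMap.lineMap x w : ℝ →ᵃ[ℝ] E)
    have he : (fun t : ℝ => h (x + t • (w - x)))
        = (h ∘ (AffineMap.lineMap x w : ℝ →ᵃ[ℝ] E)) := by
      funext t
      simp [AffineMap.lineMap_apply, add_comm]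
    rw [he]
    simpa using h2
  have hd := hasDerivAt_line h G hdiff x (w - x) 0
  have hs := hψ.le_slope_of_hasDerivAt (Set.mem_univ (0:ℝ)) (Set.mem_univ (1:ℝ))
    one_pos (by simpa using hd)
  have h0 : (fun t : ℝ => h (x + t • (w - x))) 0 = h x := by simp
  have h1 : (fun t : ℝ => h (x + t • (w - x))) 1 = h w := by simp
  rw [slope_def_field] at hs
  simp only [h0, h1] at hs
  norm_num at hs
  linarith [hs]

lemma descent_lemma (h : E → ℝ) (G : E → E) (L : ℝ) (hL : 0 < L)
    (hdiff : ∀ x, HasGradientAt h (G x) x)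
    (hlip : ∀ x y, ‖G x - G y‖ ≤ L * ‖x - y‖) (a b : E) :
    h b ≤ h a + ⟪G a, b - a⟫ + L / 2 * ‖b - a‖ ^ 2 := by
  set v := b - a with hv
  set φ := fun t : ℝ => h (a + t • v) - t * ⟪G a, v⟫ - L / 2 * ‖v‖ ^ 2 * t ^ 2 with hφ
  have hφd : ∀ t : ℝ, HasDerivAt φ
      (⟪G (a + t • v), v⟫ - ⟪G a, v⟫ - L / 2 * ‖v‖ ^ 2 * (2 * t)) t := by
    intro t
    have h1 := hasDerivAt_line h G hdiff a v t
    have h2 : HasDerivAt (fun s : ℝ => s * ⟪G a, v⟫) ⟪G a, v⟫ t := by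
      simpa using (hasDerivAt_id t).mul_const ⟪G a, v⟫
    have h3 : HasDerivAt (fun s : ℝ => L / 2 * ‖v‖ ^ 2 * s ^ 2)
        (L / 2 * ‖v‖ ^ 2 * (2 * t)) t := by
      have := (hasDerivAt_pow 2 t).const_mul (L / 2 * ‖v‖ ^ 2)
      simpa [mul_comm, mul_assoc, pow_one] using this
    exact (h1.sub h2).sub h3
  have hdiffφ : Differentiable ℝ φ := fun t => (hφd t).differentiableAt
  have hanti : AntitoneOn φ (Set.Icc (0:ℝ) 1) := by
    apply antitoneOn_of_deriv_nonpos (convex_Icc 0 1) hdiffφ.continuous.continuousOn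
      hdiffφ.differentiableOn
    intro t ht
    rw [interior_Icc] at ht
    rw [(hφd t).deriv]
    have hcs : ⟪G (a + t • v) - G a, v⟫ ≤ ‖G (a + t • v) - G a‖ * ‖v‖ :=
      real_inner_le_norm _ _
    have hl : ‖G (a + t • v) - G a‖ ≤ L * (t * ‖v‖) := by
      have := hlip (a + t • v) a
      simpa [norm_smul, abs_of_nonneg ht.1.le] using this
    have hinner : ⟪G (a + t • v), v⟫ - ⟪G a, v⟫ = ⟪G (a + t • v) - G a, v⟫ := by
      rw [inner_sub_left]
    rw [hinner]
    have hn : (0:ℝ) ≤ ‖v‖ := norm_nonneg _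
    nlinarith [norm_nonneg (G (a + t • v) - G a)]
  have := hanti (Set.mem_Icc.2 ⟨le_refl 0, zero_le_one⟩)
    (Set.mem_Icc.2 ⟨zero_le_one, le_refl 1⟩) zero_le_one
  have hφ0 : φ 0 = h a := by simp [hφ]
  have hφ1 : φ 1 = h (a + v) - ⟪G a, v⟫ - L / 2 * ‖v‖ ^ 2 := by simp [hφ]
  rw [hφ0, hφ1] at this
  have hab : a + v = b := by rw [hv]; abel
  rw [hab] at this
  linarith

lemma cocoercive (h : E → ℝ) (G : E → E) (L : ℝ) (hL : 0 < L)
    (hh : ConvexOn ℝ Set.univ h)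
    (hdiff : ∀ x, HasGradientAt h (G x) x)
    (hlip : ∀ x y, ‖G x - G y‖ ≤ L * ‖x - y‖) (x y : E) :
    1 / L * ‖G x - G y‖ ^ 2 ≤ ⟪G x - G y, x - y⟫ := by
  have key : ∀ p q : E, h p + ⟪G p, q - p⟫ + 1 / (2 * L) * ‖G q - G p‖ ^ 2 ≤ h q := by
    intro p q
    set D := G q - G p with hD
    set u := q - (1 / L) • D with hu
    have h1 := grad_lower h G hh hdiff p u
    have h2 := descent_lemma h G L hL hdiff hlip q u
    have e1 : u - p = (q - p) - (1 / L) • D := by rw [hu]; abel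
    have e2 : u - q = -((1 / L) • D) := by rw [hu]; abel
    have i1 : ⟪G p, u - p⟫ = ⟪G p, q - p⟫ - (1 / L) * ⟪G p, D⟫ := by
      rw [e1, inner_sub_right, real_inner_smul_right]
    have i2 : ⟪G q, u - q⟫ = -((1 / L) * ⟪G q, D⟫) := by
      rw [e2, inner_neg_right, real_inner_smul_right]
    have i3 : ‖u - q‖ ^ 2 = (1 / L) ^ 2 * ‖D‖ ^ 2 := by
      rw [e2, norm_neg, norm_smul]
      rw [Real.norm_eq_abs, abs_of_pos (by positivity : (0:ℝ) < 1 / L)]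
      ring
    have i4 : ⟪G q, D⟫ - ⟪G p, D⟫ = ‖D‖ ^ 2 := by
      rw [← inner_sub_left, ← hD, real_inner_self_eq_norm_sq]
    rw [i1] at h1
    rw [i2, i3] at h2
    have hLe : L / 2 * ((1 / L) ^ 2 * ‖D‖ ^ 2) = 1 / (2 * L) * ‖D‖ ^ 2 := by
      field_simp
    rw [hLe] at h2
    have i4' : 1 / L * ⟪G q, D⟫ - 1 / L * ⟪G p, D⟫ = 1 / L * ‖D‖ ^ 2 := by
      rw [← mul_sub, i4]
    have hhalf : 1 / L * ‖D‖ ^ 2 = 2 * (1 / (2 * L) * ‖D‖ ^ 2) := by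
      field_simp
    linarith [h1, h2, i4', hhalf]
  have k1 := key x y
  have k2 := key y x
  have e1 : ⟪G x, y - x⟫ = ⟪G x, y⟫ - ⟪G x, x⟫ := by rw [inner_sub_right]
  have e2 : ⟪G y, x - y⟫ = ⟪G y, x⟫ - ⟪G y, y⟫ := by rw [inner_sub_right]
  have e3 : ⟪G x - G y, x - y⟫
      = ⟪G x, x⟫ - ⟪G x, y⟫ - ⟪G y, x⟫ + ⟪G y, y⟫ := by
    rw [inner_sub_left, inner_sub_right, inner_sub_right]; ring
  have e4 : ‖G y - G x‖ = ‖G x - G y‖ := norm_sub_rev _ _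
  rw [e1] at k1
  rw [e2, show G x - G y = -(G y - G x) by abel, norm_neg] at k2
  rw [e3]
  have h5 : 1 / (2 * L) * ‖G y - G x‖ ^ 2 = 1 / (2 * L) * ‖G x - G y‖ ^ 2 := by rw [e4]
  have h2L : 1 / (2 * L) * ‖G x - G y‖ ^ 2 + 1 / (2 * L) * ‖G x - G y‖ ^ 2
      = 1 / L * ‖G x - G y‖ ^ 2 := by field_simp; ring
  linarith [k1, k2, h5, h2L]

lemma gram_nonpos {d : ℕ} (M : Matrix (Fin 4) (Fin 4) ℝ)
    (hM : ∀ v : Fin 4 → ℝ, v ⬝ᵥ (M *ᵥ v) ≤ 0)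
    (w : Fin 4 → EuclideanSpace ℝ (Fin d)) :
    ∑ i, ∑ j, M i j * ⟪w i, w j⟫ ≤ 0 := by
  have key : ∀ t : Fin d, ∑ i, ∑ j, M i j * (w i t * w j t)
      = (fun i => w i t) ⬝ᵥ (M *ᵥ (fun i => w i t)) := by
    intro t
    simp only [dotProduct, Matrix.mulVec, Finset.mul_sum]
    refine Finset.sum_congr rfl fun i _ => Finset.sum_congr rfl fun j _ => by ring
  have hsum : ∑ i, ∑ j, M i j * ⟪w i, w j⟫
      = ∑ t : Fin d, (fun i => w i t) ⬝ᵥ (M *ᵥ (fun i => w i t)) := by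
    calc ∑ i, ∑ j, M i j * ⟪w i, w j⟫
        = ∑ i, ∑ j, ∑ t, M i j * (w i t * w j t) := by
          simp only [PiLp.inner_apply, RCLike.inner_apply, conj_trivial, Finset.mul_sum]
          refine Finset.sum_congr rfl fun i _ => Finset.sum_congr rfl fun j _ => Finset.sum_congr rfl fun t _ => by ring
      _ = ∑ i : Fin 4, ∑ t : Fin d, ∑ j : Fin 4, M i j * (w i t * w j t) :=
          Finset.sum_congr rfl fun i _ => Finset.sum_comm
      _ = ∑ t : Fin d, ∑ i : Fin 4, ∑ j : Fin 4, M i j * (w i t * w j t) :=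
          Finset.sum_comm
      _ = ∑ t : Fin d, (fun i => w i t) ⬝ᵥ (M *ᵥ (fun i => w i t)) :=
          Finset.sum_congr rfl fun t _ => key t
  rw [hsum]
  exact Finset.sum_nonpos fun t _ => hM _

end TosAux

lemma Q1mat_eq (α : ℝ) : Q1mat α =
    !![-α, 0, 0, α/2; 0, 0, 0, 0; 0, 0, 0, 0; α/2, 0, 0, 0] := by
  ext i j
  fin_cases i <;> fin_cases j <;>
    simp [Q1mat, BgMat, Matrix.mul_apply, Matrix.transpose_apply, Matrix.vecHead,
      Matrix.vecTail, Fin.sum_univ_two] <;> ring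

lemma Q2mat_eq (α L : ℝ) : Q2mat α L =
    !![2*α - 4/L, 2/L - α/2, 0, 2/L - α/2;
       2/L - α/2, -(1/L), 0, -(1/L);
       0, 0, 0, 0;
       2/L - α/2, -(1/L), 0, -(1/L)] := by
  ext i j
  fin_cases i <;> fin_cases j <;>
    simp [Q2mat, BhMat, Matrix.mul_apply, Matrix.transpose_apply, Matrix.vecHead,
      Matrix.vecTail, Fin.sum_univ_two] <;> ring

lemma Q3mat_eq (α : ℝ) : Q3mat α =
    !![0, 0, 0, 0; 0, 0, α/2, 0; 0, α/2, -α, 0; 0, 0, 0, 0] := by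
  ext i j
  fin_cases i <;> fin_cases j <;>
    simp [Q3mat, BfMat, Matrix.mul_apply, Matrix.transpose_apply, Matrix.vecHead,
      Matrix.vecTail, Fin.sum_univ_two] <;> ring

set_option maxHeartbeats 1000000 in
lemma hid_lemma {d : ℕ} (α lam θ σ₁ σ₂ σ₃ L_h : ℝ)
    (A B C D : EuclideanSpace ℝ (Fin d)) :
    ∑ p, ∑ q, (W0mat α lam θ + σ₁ • Q1mat α + σ₂ • Q2mat α L_h + σ₃ • Q3mat α) p q
        * ⟪(![A, B, C, D] : Fin 4 → EuclideanSpace ℝ (Fin d)) p, ![A, B, C, D] q⟫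
      = (θ / α ^ 2) * ‖A - C‖ ^ 2 + ‖D + lam • (C - A)‖ ^ 2 - ‖D‖ ^ 2
        + σ₁ * (α * ⟪A, D - A⟫)
        + σ₂ * (α * ⟪A, (2:ℝ) • A - B - D⟫ - 1 / L_h * ‖(2:ℝ) • A - B - D‖ ^ 2)
        + σ₃ * (α * ⟪C, B - C⟫) := by
  rw [Q1mat_eq, Q2mat_eq, Q3mat_eq]
  simp [Fin.sum_univ_four, Matrix.add_apply, Matrix.smul_apply, smul_eq_mul, W0mat, -PiLp.inner_apply]
  simp only [← real_inner_self_eq_norm_sq]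
  simp only [inner_sub_left, inner_sub_right, inner_add_left, inner_add_right,
    real_inner_smul_left, real_inner_smul_right]
  simp only [real_inner_comm B A, real_inner_comm C A, real_inner_comm D A,
    real_inner_comm C B, real_inner_comm D B, real_inner_comm D C]
  ring

set_option maxHeartbeats 1000000 in
/-- **Theorem 1** (sublinear convergence of three-operator splitting with one Lipschitz
operator). If `W₀ + σ₁Q₁ + σ₂Q₂ + σ₃Q₃ ⪯ 0`, then along any TOS trajectory admitting a
fixed point, the smallest optimality residual among the first `k` iterates is bounded by
`‖z⁰ − z*‖² / (θ k)`. -/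
theorem tos_sublinear_one_lipschitz
    {d : ℕ} (hd : 1 ≤ d)
    (f g h : EuclideanSpace ℝ (Fin d) → ℝ)
    (hgrad : EuclideanSpace ℝ (Fin d) → EuclideanSpace ℝ (Fin d))
    (L_h : ℝ) (hLh : 0 < L_h)
    (hf : ConvexOn ℝ Set.univ f) (hg : ConvexOn ℝ Set.univ g)
    (hh : ConvexOn ℝ Set.univ h)
    (hdiff : ∀ x, HasGradientAt h (hgrad x) x)
    (hlip : ∀ x y, ‖hgrad x - hgrad y‖ ≤ L_h * ‖x - y‖)
    (α lam θ σ₁ σ₂ σ₃ : ℝ)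
    (hα : 0 < α) (hlam : 0 < lam) (hθ : 0 < θ)
    (hσ₁ : 0 ≤ σ₁) (hσ₂ : 0 ≤ σ₂) (hσ₃ : 0 ≤ σ₃)
    (hNSD : ∀ v : Fin 4 → ℝ,
      v ⬝ᵥ ((W0mat α lam θ + σ₁ • Q1mat α + σ₂ • Q2mat α L_h + σ₃ • Q3mat α) *ᵥ v) ≤ 0)
    -- TOS trajectory
    (z xB y xA pg pf : ℕ → EuclideanSpace ℝ (Fin d))
    (hsubg : ∀ k w, g (xB k) + ⟪pg k, w - xB k⟫ ≤ g w)
    (hsubf : ∀ k w, f (xA k) + ⟪pf k, w - xA k⟫ ≤ f w)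
    (hxB : ∀ k, xB k = z k - α • pg k)
    (hy : ∀ k, y k = (2 : ℝ) • xB k - z k - α • hgrad (xB k))
    (hxA : ∀ k, xA k = y k - α • pf k)
    (hz : ∀ k, z (k + 1) = z k + lam • (xA k - xB k))
    -- TOS fixed point
    (zs xs ys pgs pfs : EuclideanSpace ℝ (Fin d))
    (hsubgs : ∀ w, g xs + ⟪pgs, w - xs⟫ ≤ g w)
    (hsubfs : ∀ w, f xs + ⟪pfs, w - xs⟫ ≤ f w)
    (hxs : xs = zs - α • pgs)
    (hys : ys = (2 : ℝ) • xs - zs - α • hgrad xs)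
    (hxAs : xs = ys - α • pfs)
    (k : ℕ) (hk : 1 ≤ k) :
    ∃ i < k, ‖pf i + pg i + hgrad (xB i)‖ ^ 2 ≤ ‖z 0 - zs‖ ^ 2 / (θ * k) := by
  have hαne : (α:ℝ) ≠ 0 := ne_of_gt hα
  have hLne : L_h ≠ 0 := ne_of_gt hLh
  -- residual identity along the trajectory
  have hres : ∀ i, α • (pf i + pg i + hgrad (xB i)) = xB i - xA i := by
    intro i
    have e1 : α • pg i = z i - xB i := by rw [hxB i]; abel
    have e2 : α • pf i = y i - xA i := by rw [hxA i]; abel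
    have e3 : α • hgrad (xB i) = (2 : ℝ) • xB i - z i - y i := by rw [hy i]; abel
    rw [smul_add, smul_add, e1, e2, e3, two_smul]
    abel
  -- the one-step Lyapunov inequality
  have hstep : ∀ i, θ * ‖pf i + pg i + hgrad (xB i)‖ ^ 2
      ≤ ‖z i - zs‖ ^ 2 - ‖z (i + 1) - zs‖ ^ 2 := by
    intro i
    set A := xB i - xs with hA
    set B := y i - ys with hB
    set C := xA i - xs with hC
    set D := z i - zs with hD
    have hDA : D - A = α • (pg i - pgs) := by
      rw [hD, hA, hxB i, hxs, smul_sub]; abel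
    have hBC : B - C = α • (pf i - pfs) := by
      rw [hB, hC, hxA i, hxAs, smul_sub]; abel
    have h2ABD : (2:ℝ) • A - B - D = α • (hgrad (xB i) - hgrad xs) := by
      rw [hA, hB, hD, hy i, hys]
      simp only [smul_sub]
      abel
    have hS1 : 0 ≤ ⟪pg i - pgs, A⟫ := by
      have hg1 := hsubg i xs
      have hg2 := hsubgs (xB i)
      have he : ⟪pg i - pgs, A⟫ = -(⟪pg i, xs - xB i⟫ + ⟪pgs, xB i - xs⟫) := by
        rw [hA, inner_sub_left, show xs - xB i = -(xB i - xs) from by abel, inner_neg_right]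
        ring
      rw [he]; linarith
    have hS3 : 0 ≤ ⟪pf i - pfs, C⟫ := by
      have hg1 := hsubf i xs
      have hg2 := hsubfs (xA i)
      have he : ⟪pf i - pfs, C⟫ = -(⟪pf i, xs - xA i⟫ + ⟪pfs, xA i - xs⟫) := by
        rw [hC, inner_sub_left, show xs - xA i = -(xA i - xs) from by abel, inner_neg_right]
        ring
      rw [he]; linarith
    have hS2 : 1 / L_h * ‖hgrad (xB i) - hgrad xs‖ ^ 2 ≤ ⟪hgrad (xB i) - hgrad xs, A⟫ := by
      rw [hA]
      exact cocoercive h hgrad L_h hLh hh hdiff hlip (xB i) xs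
    have hgram := gram_nonpos _ hNSD ![A, B, C, D]
    have hid := hid_lemma (d := d) α lam θ σ₁ σ₂ σ₃ L_h A B C D
    have hq1 : 0 ≤ α * ⟪A, D - A⟫ := by
      rw [hDA, real_inner_smul_right]
      have h0 : 0 ≤ ⟪A, pg i - pgs⟫ := by rw [real_inner_comm]; exact hS1
      exact mul_nonneg hα.le (mul_nonneg hα.le h0)
    have hq3 : 0 ≤ α * ⟪C, B - C⟫ := by
      rw [hBC, real_inner_smul_right]
      have h0 : 0 ≤ ⟪C, pf i - pfs⟫ := by rw [real_inner_comm]; exact hS3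
      exact mul_nonneg hα.le (mul_nonneg hα.le h0)
    have hq2 : 0 ≤ α * ⟪A, (2:ℝ) • A - B - D⟫ - 1 / L_h * ‖(2:ℝ) • A - B - D‖ ^ 2 := by
      rw [h2ABD, real_inner_smul_right, norm_smul, Real.norm_eq_abs, abs_of_pos hα]
      have h0 : 1 / L_h * ‖hgrad (xB i) - hgrad xs‖ ^ 2
          ≤ ⟪A, hgrad (xB i) - hgrad xs⟫ := by
        rw [real_inner_comm]; exact hS2
      have he : α * (α * ⟪A, hgrad (xB i) - hgrad xs⟫)
          - 1 / L_h * (α * ‖hgrad (xB i) - hgrad xs‖) ^ 2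
          = α ^ 2 * (⟪A, hgrad (xB i) - hgrad xs⟫
            - 1 / L_h * ‖hgrad (xB i) - hgrad xs‖ ^ 2) := by
        ring
      rw [he]
      exact mul_nonneg (sq_nonneg α) (by linarith)
    have hmain : (θ / α ^ 2) * ‖A - C‖ ^ 2 + ‖D + lam • (C - A)‖ ^ 2 - ‖D‖ ^ 2 ≤ 0 := by
      rw [hid] at hgram
      nlinarith [mul_nonneg hσ₁ hq1, mul_nonneg hσ₂ hq2, mul_nonneg hσ₃ hq3]
    have hzp : z (i + 1) - zs = D + lam • (C - A) := by
      rw [hz i, hD, hC, hA]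
      simp only [smul_sub]
      abel
    have hACr : A - C = α • (pf i + pg i + hgrad (xB i)) := by
      rw [hres i, hA, hC]; abel
    have hnr : ‖A - C‖ ^ 2 = α ^ 2 * ‖pf i + pg i + hgrad (xB i)‖ ^ 2 := by
      rw [hACr, norm_smul, Real.norm_eq_abs, abs_of_pos hα]
      ring
    have hfin : θ * ‖pf i + pg i + hgrad (xB i)‖ ^ 2 = (θ / α ^ 2) * ‖A - C‖ ^ 2 := by
      rw [hnr]
      field_simp
    rw [hfin, hzp]
    linarith [hmain]
  -- sum the inequality and take the minimum
  have hk0 : (0:ℝ) < (k:ℝ) := by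
    have : 0 < k := hk
    exact_mod_cast this
  obtain ⟨i, hi, hmin⟩ := Finset.exists_min_image (Finset.range k)
    (fun j => ‖pf j + pg j + hgrad (xB j)‖ ^ 2) ⟨0, Finset.mem_range.2 (by omega)⟩
  refine ⟨i, Finset.mem_range.1 hi, ?_⟩
  have h1 : (k:ℝ) * (θ * ‖pf i + pg i + hgrad (xB i)‖ ^ 2)
      ≤ ∑ j ∈ Finset.range k, θ * ‖pf j + pg j + hgrad (xB j)‖ ^ 2 := by
    have hle := Finset.sum_le_sum (fun j hj =>
      mul_le_mul_of_nonneg_left (hmin j hj) hθ.le)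
    calc (k:ℝ) * (θ * ‖pf i + pg i + hgrad (xB i)‖ ^ 2)
        = ∑ _j ∈ Finset.range k, θ * ‖pf i + pg i + hgrad (xB i)‖ ^ 2 := by
          rw [Finset.sum_const, Finset.card_range, nsmul_eq_mul]
      _ ≤ _ := hle
  have h2 : ∑ j ∈ Finset.range k, θ * ‖pf j + pg j + hgrad (xB j)‖ ^ 2
      ≤ ‖z 0 - zs‖ ^ 2 - ‖z k - zs‖ ^ 2 := by
    calc ∑ j ∈ Finset.range k, θ * ‖pf j + pg j + hgrad (xB j)‖ ^ 2
        ≤ ∑ j ∈ Finset.range k, (‖z j - zs‖ ^ 2 - ‖z (j+1) - zs‖ ^ 2) :=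
          Finset.sum_le_sum fun j _ => hstep j
      _ = ‖z 0 - zs‖ ^ 2 - ‖z k - zs‖ ^ 2 :=
          Finset.sum_range_sub' (fun j => ‖z j - zs‖ ^ 2) k
  rw [le_div_iff₀ (by positivity : (0:ℝ) < θ * (k:ℝ))]
  have hzk : (0:ℝ) ≤ ‖z k - zs‖ ^ 2 := sq_nonneg _
  nlinarith [h1, h2, hzk]
end

section
/- Best sublinear bound on the splitting gap (Remark 1, second bound): Let d ≥ 1, let f, g : ℝ^d → ℝ be convex, and let h : ℝ^d → ℝ be convex and differentiable with L_h-Lipschitz gradient, L_h > 0. Set λ = 1/2 and α = 3/(2L_h). Then along any TOS trajectory with stepsize α and relaxation λ that admits a TOS fixed point (z*, x*, y*, p_g*, p_f*), one has for every k ≥ 1: min over 0 ≤ i < k of ‖x_B^i − x_A^i‖² ≤ 8 ‖z⁰ − z*‖² / (3 k). -/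
open scoped RealInnerProductSpace

section AuxTOS

variable {E : Type*} [NormedAddCommGroup E] [InnerProductSpace ℝ E]

lemma my_step (a b c B u Δz : E) (hB : B = Δz - a) (hu : u = -(a + b + c))
    (h1 : 0 ≤ ⟪a, B⟫) (h2 : 0 ≤ ⟪b, B + u⟫) (h3 : 2/3 * ‖c‖ ^ 2 ≤ ⟪c, B⟫) :
    ‖Δz + (1/2 : ℝ) • u‖ ^ 2 ≤ ‖Δz‖ ^ 2 - 3/8 * ‖u‖ ^ 2 := by
  subst hB hu
  have young : (0:ℝ) ≤ ‖(4/3 : ℝ) • c + -(a + b + c)‖ ^ 2 := by positivity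
  simp only [← real_inner_self_eq_norm_sq] at young h3 ⊢
  simp only [inner_add_left, inner_add_right, inner_sub_left, inner_sub_right,
    inner_neg_left, inner_neg_right, real_inner_smul_left, real_inner_smul_right] at *
  linarith [real_inner_comm a b, real_inner_comm a c, real_inner_comm b c,
    real_inner_comm a Δz, real_inner_comm b Δz, real_inner_comm c Δz]

variable [CompleteSpace E]

lemma my_grad_lower {φ : E → ℝ} {G : E → E} (hφ : ConvexOn ℝ Set.univ φ)
    (hd : ∀ x, HasGradientAt φ (G x) x) (x y : E) :
    φ x + ⟪G x, y - x⟫ ≤ φ y := by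
  have hcurve : ∀ t : ℝ, HasDerivAt (fun t : ℝ => x + t • (y - x)) (y - x) t := by
    intro t
    simpa using ((hasDerivAt_id t).smul_const (y - x)).const_add x
  have hder : ∀ t : ℝ, HasDerivAt (fun t : ℝ => φ (x + t • (y - x)))
      ⟪G (x + t • (y - x)), y - x⟫ t := by
    intro t
    have := ((hd (x + t • (y - x))).hasFDerivAt).comp_hasDerivAt t (hcurve t)
    simp [InnerProductSpace.toDual_apply_apply] at this
    exact this
  have hψ : ConvexOn ℝ Set.univ (fun t : ℝ => φ (x + t • (y - x))) := by
    have h2 := hφ.comp_affineMap (AffineMap.lineMap x y : ℝ →ᵃ[ℝ] E)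
    simp only [Set.preimage_univ] at h2
    have he : (fun t : ℝ => φ (x + t • (y - x))) = φ ∘ (AffineMap.lineMap x y : ℝ →ᵃ[ℝ] E) := by
      funext t
      simp only [Function.comp_apply]
      congr 1
      simp only [AffineMap.lineMap_apply, vsub_eq_sub, vadd_eq_add]
      module
    rw [he]
    exact h2
  have hslope := hψ.le_slope_of_hasDerivAt (Set.mem_univ (0:ℝ)) (Set.mem_univ (1:ℝ))
    zero_lt_one (hder 0)
  simp only [slope_def_field] at hslope
  have e0 : x + (0:ℝ) • (y - x) = x := by module
  have e1 : x + (1:ℝ) • (y - x) = y := by module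
  rw [e0, e1] at hslope
  have : ⟪G x, y - x⟫ ≤ (φ y - φ x) / (1 - 0) := by
    simpa [div_sub_div_same] using hslope
  simp at this
  linarith

lemma my_descent {φ : E → ℝ} {G : E → E} {L : ℝ} (hL : 0 < L)
    (hd : ∀ x, HasGradientAt φ (G x) x)
    (hlip : ∀ x y, ‖G x - G y‖ ≤ L * ‖x - y‖) (x y : E) :
    φ y ≤ φ x + ⟪G x, y - x⟫ + L / 2 * ‖y - x‖ ^ 2 := by
  set v := y - x with hv
  set χ : ℝ → ℝ := fun t => φ (x + t • v) - t * ⟪G x, v⟫ - L / 2 * t ^ 2 * ‖v‖ ^ 2 with hχ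
  have hcurve : ∀ t : ℝ, HasDerivAt (fun t : ℝ => x + t • v) v t := by
    intro t; simpa using ((hasDerivAt_id t).smul_const v).const_add x
  have hder : ∀ t : ℝ, HasDerivAt χ
      (⟪G (x + t • v), v⟫ - ⟪G x, v⟫ - L * t * ‖v‖ ^ 2) t := by
    intro t
    have h1 : HasDerivAt (fun t : ℝ => φ (x + t • v)) ⟪G (x + t • v), v⟫ t := by
      have := ((hd (x + t • v)).hasFDerivAt).comp_hasDerivAt t (hcurve t)
      simp [InnerProductSpace.toDual_apply_apply] at this
      exact this
    have h2 : HasDerivAt (fun t : ℝ => t * ⟪G x, v⟫) ⟪G x, v⟫ t := by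
      simpa using (hasDerivAt_id t).mul_const (⟪G x, v⟫ : ℝ)
    have h3 : HasDerivAt (fun t : ℝ => L / 2 * t ^ 2 * ‖v‖ ^ 2) (L * t * ‖v‖ ^ 2) t := by
      have : HasDerivAt (fun t : ℝ => t ^ 2) (2 * t) t := by
        simpa using hasDerivAt_pow 2 t
      have := (this.const_mul (L / 2)).mul_const (‖v‖ ^ 2)
      rw [show L * t * ‖v‖ ^ 2 = L / 2 * (2 * t) * ‖v‖ ^ 2 by ring]
      exact this
    exact (h1.sub h2).sub h3
  have hdiffχ : Differentiable ℝ χ := fun t => (hder t).differentiableAt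
  have hanti : AntitoneOn χ (Set.Icc (0:ℝ) 1) := by
    apply antitoneOn_of_deriv_nonpos (convex_Icc 0 1) hdiffχ.continuous.continuousOn
      hdiffχ.differentiableOn
    intro t ht
    rw [interior_Icc] at ht
    rw [(hder t).deriv]
    have hb : ⟪G (x + t • v) - G x, v⟫ ≤ L * t * ‖v‖ ^ 2 := by
      calc ⟪G (x + t • v) - G x, v⟫ ≤ ‖G (x + t • v) - G x‖ * ‖v‖ :=
            real_inner_le_norm _ _
        _ ≤ (L * ‖(x + t • v) - x‖) * ‖v‖ := by
            have := hlip (x + t • v) x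
            nlinarith [norm_nonneg v]
        _ = L * t * ‖v‖ ^ 2 := by
            have : ‖(x + t • v) - x‖ = t * ‖v‖ := by
              rw [add_sub_cancel_left, norm_smul, Real.norm_eq_abs,
                abs_of_pos ht.1]
            rw [this]; ring
    rw [inner_sub_left] at hb
    linarith
  have hle := hanti (Set.left_mem_Icc.mpr zero_le_one) (Set.right_mem_Icc.mpr zero_le_one)
    zero_le_one
  have e0 : χ 0 = φ x := by simp [hχ]
  have e1 : χ 1 = φ y - ⟪G x, v⟫ - L / 2 * ‖v‖ ^ 2 := by
    have h1v : x + v = y := by rw [hv]; module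
    simp [hχ, h1v]
  rw [e0, e1] at hle
  linarith

lemma my_coco {φ : E → ℝ} {G : E → E} {L : ℝ} (hL : 0 < L)
    (hφ : ConvexOn ℝ Set.univ φ) (hd : ∀ x, HasGradientAt φ (G x) x)
    (hlip : ∀ x y, ‖G x - G y‖ ≤ L * ‖x - y‖) (x y : E) :
    1 / L * ‖G x - G y‖ ^ 2 ≤ ⟪G x - G y, x - y⟫ := by
  have key : ∀ p q : E, φ p + ⟪G p, q - p⟫ + 1 / (2 * L) * ‖G q - G p‖ ^ 2 ≤ φ q := by
    intro p q
    set w := q - (1 / L) • (G q - G p) with hw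
    have h1 := my_grad_lower hφ hd p w
    have h2 := my_descent hL hd hlip q w
    have ew : w - q = -((1 / L) • (G q - G p)) := by rw [hw]; module
    have ewp : w - p = (q - p) - (1 / L) • (G q - G p) := by rw [hw]; module
    have e1 : ⟪G q, w - q⟫ = -(1 / L) * ⟪G q, G q - G p⟫ := by
      rw [ew, inner_neg_right, real_inner_smul_right]; ring
    have e2 : ‖w - q‖ ^ 2 = (1 / L) ^ 2 * ‖G q - G p‖ ^ 2 := by
      rw [ew, norm_neg, norm_smul, mul_pow, Real.norm_eq_abs, sq_abs]
    have e3 : ⟪G p, w - p⟫ = ⟪G p, q - p⟫ - (1 / L) * ⟪G p, G q - G p⟫ := by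
      rw [ewp, inner_sub_right, real_inner_smul_right]
    have e4 : ⟪G q, G q - G p⟫ - ⟪G p, G q - G p⟫ = ‖G q - G p‖ ^ 2 := by
      rw [← inner_sub_left, real_inner_self_eq_norm_sq]
    rw [e1, e2] at h2
    rw [e3] at h1
    have hL' : L ≠ 0 := ne_of_gt hL
    have : φ p + (⟪G p, q - p⟫ - (1 / L) * ⟪G p, G q - G p⟫) ≤
        φ q + -(1 / L) * ⟪G q, G q - G p⟫ + L / 2 * ((1 / L) ^ 2 * ‖G q - G p‖ ^ 2) :=
      le_trans h1 h2
    have hfield : L / 2 * ((1 / L) ^ 2 * ‖G q - G p‖ ^ 2) = 1 / (2 * L) * ‖G q - G p‖ ^ 2 := by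
      field_simp
    rw [hfield] at this
    have e5 : 1 / L * (⟪G q, G q - G p⟫ - ⟪G p, G q - G p⟫) = 1 / L * ‖G q - G p‖ ^ 2 := by
      rw [e4]
    have e6 : 1 / L * ‖G q - G p‖ ^ 2 = 2 * (1 / (2 * L) * ‖G q - G p‖ ^ 2) := by
      field_simp
    linarith
  have k1 := key x y
  have k2 := key y x
  have en : ‖G y - G x‖ = ‖G x - G y‖ := norm_sub_rev _ _
  have einner : ⟪G x, y - x⟫ + ⟪G y, x - y⟫ = -⟪G x - G y, x - y⟫ := by
    rw [inner_sub_left]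
    have : ⟪G x, y - x⟫ = -⟪G x, x - y⟫ := by
      rw [← inner_neg_right]; congr 1; abel
    rw [this]; ring
  rw [en] at k1
  have h2L : 0 < 2 * L := by linarith
  have : 2 * (1 / (2 * L)) * ‖G x - G y‖ ^ 2 ≤ ⟪G x - G y, x - y⟫ := by nlinarith
  have e : 2 * (1 / (2 * L)) = 1 / L := by field_simp
  rwa [e] at this

end AuxTOS

/-- **Remark 1, second bound** (best sublinear bound on the splitting gap). With `λ = 1/2`
and `α = 3/(2L_h)`, any TOS trajectory admitting a fixed point satisfies, for every `k ≥ 1`,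
`min_{0 ≤ i < k} ‖x_B^i − x_A^i‖² ≤ 8 ‖z⁰ − z*‖² / (3k)`. -/
theorem tos_best_sublinear_gap_bound
    {d : ℕ} (hd : 1 ≤ d)
    (f g h : EuclideanSpace ℝ (Fin d) → ℝ)
    (hgrad : EuclideanSpace ℝ (Fin d) → EuclideanSpace ℝ (Fin d))
    (L_h : ℝ) (hLh : 0 < L_h)
    (hf : ConvexOn ℝ Set.univ f) (hg : ConvexOn ℝ Set.univ g)
    (hh : ConvexOn ℝ Set.univ h)
    (hdiff : ∀ x, HasGradientAt h (hgrad x) x)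
    (hlip : ∀ x y, ‖hgrad x - hgrad y‖ ≤ L_h * ‖x - y‖)
    (α lam : ℝ) (hlam : lam = 1 / 2) (hα : α = 3 / (2 * L_h))
    -- TOS trajectory
    (z xB y xA pg pf : ℕ → EuclideanSpace ℝ (Fin d))
    (hsubg : ∀ k w, g (xB k) + ⟪pg k, w - xB k⟫ ≤ g w)
    (hsubf : ∀ k w, f (xA k) + ⟪pf k, w - xA k⟫ ≤ f w)
    (hxB : ∀ k, xB k = z k - α • pg k)
    (hy : ∀ k, y k = (2 : ℝ) • xB k - z k - α • hgrad (xB k))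
    (hxA : ∀ k, xA k = y k - α • pf k)
    (hz : ∀ k, z (k + 1) = z k + lam • (xA k - xB k))
    -- TOS fixed point
    (zs xs ys pgs pfs : EuclideanSpace ℝ (Fin d))
    (hsubgs : ∀ w, g xs + ⟪pgs, w - xs⟫ ≤ g w)
    (hsubfs : ∀ w, f xs + ⟪pfs, w - xs⟫ ≤ f w)
    (hxs : xs = zs - α • pgs)
    (hys : ys = (2 : ℝ) • xs - zs - α • hgrad xs)
    (hxAs : xs = ys - α • pfs)
    (k : ℕ) (hk : 1 ≤ k) :
    ∃ i < k, ‖xB i - xA i‖ ^ 2 ≤ 8 * ‖z 0 - zs‖ ^ 2 / (3 * k) := by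
  subst hlam
  have hα0 : (0:ℝ) < α := by rw [hα]; positivity
  -- fixed point identity
  have hfix : α • pgs + α • hgrad xs + α • pfs = 0 := by
    have e2 := hxAs
    rw [hys] at e2
    linear_combination (norm := module) hxs + e2
  -- per-step decrease
  have hdec : ∀ n, ‖z (n+1) - zs‖ ^ 2 ≤ ‖z n - zs‖ ^ 2 - 3/8 * ‖xA n - xB n‖ ^ 2 := by
    intro n
    have hBdef : xB n - xs = (z n - zs) - α • (pg n - pgs) := by
      rw [hxB n, hxs]; module
    have hudef : xA n - xB n =
        -(α • (pg n - pgs) + α • (pf n - pfs) + α • (hgrad (xB n) - hgrad xs)) := by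
      rw [hxA n, hy n, hxB n]
      linear_combination (norm := module) (-1 : ℝ) • hfix
    have h1 : (0:ℝ) ≤ ⟪α • (pg n - pgs), xB n - xs⟫ := by
      rw [real_inner_smul_left]
      have mono : (0:ℝ) ≤ ⟪pg n - pgs, xB n - xs⟫ := by
        have m1 := hsubg n xs
        have m2 := hsubgs (xB n)
        have e : ⟪pg n - pgs, xB n - xs⟫ = -⟪pg n, xs - xB n⟫ - ⟪pgs, xB n - xs⟫ := by
          simp only [inner_sub_left, inner_sub_right]; ring
        rw [e]; linarith
      exact mul_nonneg hα0.le mono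
    have h2 : (0:ℝ) ≤ ⟪α • (pf n - pfs), (xB n - xs) + (xA n - xB n)⟫ := by
      have eBu : (xB n - xs) + (xA n - xB n) = xA n - xs := by abel
      rw [eBu, real_inner_smul_left]
      have mono : (0:ℝ) ≤ ⟪pf n - pfs, xA n - xs⟫ := by
        have m1 := hsubf n xs
        have m2 := hsubfs (xA n)
        have e : ⟪pf n - pfs, xA n - xs⟫ = -⟪pf n, xs - xA n⟫ - ⟪pfs, xA n - xs⟫ := by
          simp only [inner_sub_left, inner_sub_right]; ring
        rw [e]; linarith
      exact mul_nonneg hα0.le mono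
    have h3 : 2/3 * ‖α • (hgrad (xB n) - hgrad xs)‖ ^ 2 ≤
        ⟪α • (hgrad (xB n) - hgrad xs), xB n - xs⟫ := by
      have hc := my_coco hLh hh hdiff hlip (xB n) xs
      rw [norm_smul, real_inner_smul_left, Real.norm_eq_abs, abs_of_pos hα0]
      have hkey : 2/3 * α ^ 2 = α * (1 / L_h) := by
        rw [hα]; field_simp
      nlinarith [mul_le_mul_of_nonneg_left hc hα0.le]
    have key := my_step (α • (pg n - pgs)) (α • (pf n - pfs))
      (α • (hgrad (xB n) - hgrad xs)) (xB n - xs) (xA n - xB n) (z n - zs)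
      hBdef hudef h1 h2 h3
    have ez : z (n+1) - zs = (z n - zs) + (1/2 : ℝ) • (xA n - xB n) := by
      rw [hz n]; module
    rw [ez]
    exact key
  -- telescoping sum
  have hsum : ∀ n, 3/8 * ∑ i ∈ Finset.range n, ‖xA i - xB i‖ ^ 2 ≤
      ‖z 0 - zs‖ ^ 2 - ‖z n - zs‖ ^ 2 := by
    intro n
    induction n with
    | zero => simp
    | succ m ih =>
      rw [Finset.sum_range_succ]
      have := hdec m
      linarith
  -- take the minimum
  obtain ⟨i, hik, hmin⟩ := Finset.exists_min_image (Finset.range k)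
    (fun i => ‖xA i - xB i‖ ^ 2) ⟨0, Finset.mem_range.mpr hk⟩
  refine ⟨i, Finset.mem_range.mp hik, ?_⟩
  have hcard : (k : ℝ) * ‖xA i - xB i‖ ^ 2 ≤ ∑ j ∈ Finset.range k, ‖xA j - xB j‖ ^ 2 := by
    have := Finset.card_nsmul_le_sum (Finset.range k)
      (fun j => ‖xA j - xB j‖ ^ 2) (‖xA i - xB i‖ ^ 2) (fun j hj => hmin j hj)
    simpa [Finset.card_range, nsmul_eq_mul] using this
  have hzn : (0:ℝ) ≤ ‖z k - zs‖ ^ 2 := by positivity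
  have hsk := hsum k
  have hkpos : (0:ℝ) < (k : ℝ) := by exact_mod_cast Nat.lt_of_lt_of_le Nat.zero_lt_one hk
  rw [show ‖xB i - xA i‖ = ‖xA i - xB i‖ from norm_sub_rev _ _]
  rw [le_div_iff₀ (by positivity : (0:ℝ) < 3 * (k : ℝ))]
  nlinarith [hcard, hsk, hzn]
end

section
/- Fixed points of TOS are minimizers: Let E be a real inner product space, let f, g : E → ℝ be convex, let h : E → ℝ be convex and differentiable, and let α > 0. Suppose z*, x*, y* ∈ E, p_g* is a subgradient of g at x*, p_f* is a subgradient of f at x*, and x* = z* − α p_g*, y* = 2x* − z* − α∇h(x*), x* = y* − α p_f*. Then p_f* + p_g* + ∇h(x*) = 0, and consequently x* is a global minimizer of f + g + h: (f+g+h)(x*) ≤ (f+g+h)(w) for all w ∈ E. -/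
open scoped RealInnerProductSpace

/-- Gradient inequality for a convex differentiable function. -/
lemma convex_grad_ineq {E : Type*} [NormedAddCommGroup E] [InnerProductSpace ℝ E]
    (h : E → ℝ) (hh : ConvexOn ℝ Set.univ h) (x w p : E)
    (hd : HasFDerivAt h (InnerProductSpace.toDualMap ℝ E p) x) :
    h x + ⟪p, w - x⟫ ≤ h w := by
  set c : ℝ → E := fun t => x + t • (w - x) with hc
  have hcd : HasDerivAt c (w - x) 0 := by
    have : HasDerivAt (fun t : ℝ => t • (w - x)) ((1 : ℝ) • (w - x)) 0 :=
      (hasDerivAt_id 0).smul_const (w - x)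
    simpa [c, one_smul] using this.const_add x
  have hφd : HasDerivAt (fun t : ℝ => h (c t)) ⟪p, w - x⟫ 0 := by
    have hd' : HasFDerivAt h (InnerProductSpace.toDualMap ℝ E p) (c 0) := by
      simpa [c] using hd
    have := hd'.comp_hasDerivAt 0 hcd
    simpa [Function.comp_def, c] using this
  have hφc : ConvexOn ℝ Set.univ (fun t : ℝ => h (c t)) := by
    have := hh.comp_affineMap (AffineMap.lineMap x w : ℝ →ᵃ[ℝ] E)
    have heq : (fun t : ℝ => h (c t)) = h ∘ (AffineMap.lineMap x w : ℝ →ᵃ[ℝ] E) := by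
      funext t; simp [c, AffineMap.lineMap_apply, vsub_eq_sub, vadd_eq_add]
      rw [add_comm]
    rw [heq]
    simpa using this
  have := hφc.le_slope_of_hasDerivAt (x := (0:ℝ)) (y := 1) (Set.mem_univ _) (Set.mem_univ _)
    one_pos hφd
  have hs : slope (fun t : ℝ => h (c t)) 0 1 = h w - h x := by
    simp [slope, c]
  rw [hs] at this
  linarith

/-- **Fixed points of TOS are minimizers.** If `(z*, x*, y*, p_g*, p_f*)` satisfies the
fixed-point equations of the three-operator splitting iteration, then
`p_f* + p_g* + ∇h(x*) = 0` and `x*` is a global minimizer of `f + g + h`. -/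
theorem tos_fixed_point_is_minimizer
    {E : Type*} [NormedAddCommGroup E] [InnerProductSpace ℝ E]
    (f g h : E → ℝ) (hgrad : E → E) (α : ℝ) (hα : 0 < α)
    (hf : ConvexOn ℝ Set.univ f) (hg : ConvexOn ℝ Set.univ g)
    (hh : ConvexOn ℝ Set.univ h)
    (hdiff : ∀ x, HasFDerivAt h (InnerProductSpace.toDualMap ℝ E (hgrad x)) x)
    (zs xs ys pgs pfs : E)
    (hsubg : ∀ w, g xs + ⟪pgs, w - xs⟫ ≤ g w)
    (hsubf : ∀ w, f xs + ⟪pfs, w - xs⟫ ≤ f w)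
    (hxs : xs = zs - α • pgs)
    (hys : ys = (2 : ℝ) • xs - zs - α • hgrad xs)
    (hxAs : xs = ys - α • pfs) :
    pfs + pgs + hgrad xs = 0 ∧
      ∀ w, f xs + g xs + h xs ≤ f w + g w + h w := by
  have hsum : pfs + pgs + hgrad xs = 0 := by
    have h3 : xs = (2 : ℝ) • xs - zs - α • hgrad xs - α • pfs := by
      have h3' := hxAs
      rw [hys] at h3'
      exact h3'
    have h4 : ((2 : ℝ) • xs - zs - α • hgrad xs - α • pfs) - xs = 0 := by
      rw [← h3]; simp
    have h5 : (zs - α • pgs) - xs = 0 := by rw [← hxs]; simp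
    have h1 : α • (pfs + pgs + hgrad xs) = 0 := by
      have key : α • (pfs + pgs + hgrad xs) =
          -((((2 : ℝ) • xs - zs - α • hgrad xs - α • pfs) - xs) + ((zs - α • pgs) - xs)) := by
        module
      rw [key, h4, h5]; simp
    have := smul_eq_zero.mp h1
    rcases this with h | h
    · exact absurd h (ne_of_gt hα)
    · exact h
  refine ⟨hsum, fun w => ?_⟩
  have hherr := convex_grad_ineq h hh xs w (hgrad xs) (hdiff xs)
  have hgw := hsubg w
  have hfw := hsubf w
  have hzero : ⟪pfs, w - xs⟫ + ⟪pgs, w - xs⟫ + ⟪hgrad xs, w - xs⟫ = 0 := by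
    rw [← inner_add_left, ← inner_add_left, hsum, inner_zero_left]
  linarith
end
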